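/- Let ρ : A_ℂ → End(V) be a nonzero finite-dimensional unital representation of the complexified fusion ring A_ℂ on a complex inner product space V which is a *-representation, i.e. ρ(b_{i*}) = ρ(b_i)† (Hermitian adjoint) for all i ∈ I, and suppose z_ρ acts on V by a scalar α (ρ(z_ρ) = α·id_V). Then α is a real number and α > 0. -/

import Mathlib

open scoped BigOperators

/-- A fusion ring datum: finite index set `I`, unit index `zero`, duality involution `dual`,
and structure constants `N` satisfying associativity, unit, duality and symmetry axioms. -/
structure FusionData (I : Type*) [Fintype I] [DecidableEq I] where
  zero : I
  dual : I → I
  N : I → I → I → ℕ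
  dual_dual : ∀ i, dual (dual i) = i
  dual_zero : dual zero = zero
  assoc : ∀ i j k l, ∑ m, N i j m * N m k l = ∑ m, N j k m * N i m l
  unit_left : ∀ j m, N zero j m = if j = m then 1 else 0
  unit_right : ∀ i m, N i zero m = if i = m then 1 else 0
  duality : ∀ i j, N i j zero = if j = dual i then 1 else 0
  sym1 : ∀ i j m, N i j m = N j (dual m) (dual i)
  sym2 : ∀ i j m, N i j m = N (dual m) i (dual j)
  sym3 : ∀ i j m, N i j m = N (dual j) (dual i) (dual m)

/-- The trace of the adjoint is the conjugate of the trace. -/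
lemma trace_adjoint_conj {V : Type*} [NormedAddCommGroup V] [InnerProductSpace ℂ V]
    [FiniteDimensional ℂ V] (T : V →ₗ[ℂ] V) :
    LinearMap.trace ℂ V (LinearMap.adjoint T) = starRingEnd ℂ (LinearMap.trace ℂ V T) := by
  let v := stdOrthonormalBasis ℂ V
  rw [LinearMap.trace_eq_matrix_trace ℂ v.toBasis, LinearMap.trace_eq_matrix_trace ℂ v.toBasis,
    LinearMap.toMatrix_adjoint]
  simp [Matrix.trace, Matrix.diag, map_sum]

/-- For a nonzero finite-dimensional unital *-representation `ρ` of the complexified fusion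
ring on a complex inner product space, on which `z_ρ` acts by the scalar `α`, the scalar
`α` is real and positive. -/
theorem formal_codegree_pos {I : Type*} [Fintype I] [DecidableEq I]
    (F : FusionData I)
    {A : Type*} [Ring A] [Algebra ℂ A] (b : Module.Basis I ℂ A)
    (hb1 : b F.zero = 1)
    (hbmul : ∀ i j, b i * b j = ∑ m, (F.N i j m : ℂ) • b m)
    {V : Type*} [NormedAddCommGroup V] [InnerProductSpace ℂ V]
    [FiniteDimensional ℂ V] [Nontrivial V]
    (ρ : A →ₐ[ℂ] Module.End ℂ V)
    -- `ρ` is a *-representation: `ρ (b i*) = (ρ (b i))†`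
    (hstar : ∀ i, ρ (b (F.dual i)) = LinearMap.adjoint (ρ (b i)))
    (α : ℂ)
    (hα : ρ (∑ i, (LinearMap.trace ℂ V (ρ (b i))) • b (F.dual i))
            = α • (1 : Module.End ℂ V)) :
    α.im = 0 ∧ 0 < α.re := by
  set n : ℕ := Module.finrank ℂ V with hn
  have hnpos : 0 < n := Module.finrank_pos
  set lam : I → ℂ := fun i => LinearMap.trace ℂ V (ρ (b i)) with hlam
  have hlamzero : lam F.zero = (n : ℂ) := by
    simp [hlam, hb1, map_one, LinearMap.trace_one, hn]
  have key : α * (n : ℂ) = ∑ i, (Complex.normSq (lam i) : ℂ) := by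
    have h := congrArg (LinearMap.trace ℂ V) hα
    rw [map_sum, map_sum] at h
    simp only [map_smul, smul_eq_mul, LinearMap.trace_one] at h
    rw [← hn] at h
    rw [← h]
    refine Finset.sum_congr rfl fun i _ => ?_
    rw [hstar i, trace_adjoint_conj]
    exact Complex.mul_conj _
  set S : ℝ := ∑ i, Complex.normSq (lam i) with hS
  have hkey : α * (n : ℂ) = (S : ℝ) := by
    rw [key, hS]; push_cast; ring
  have hSpos : 0 < S := by
    have h1 : Complex.normSq (lam F.zero) ≤ S :=
      Finset.single_le_sum (f := fun i => Complex.normSq (lam i))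
        (fun i _ => Complex.normSq_nonneg _) (Finset.mem_univ _)
    have h2 : 0 < Complex.normSq (lam F.zero) := by
      rw [hlamzero]
      simp [Complex.normSq_pos]
      positivity
    linarith
  have hα' : α = ((S / n : ℝ) : ℂ) := by
    have hn0 : (n : ℂ) ≠ 0 := Nat.cast_ne_zero.mpr hnpos.ne'
    push_cast
    rw [eq_div_iff hn0]
    exact hkey
  rw [hα']
  constructor
  · simp
  · simp only [Complex.ofReal_re]
    positivity
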